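/- Let f : ℝ³ → ℂ be locally integrable and let u_f(t,x) := (t/4π) ∫_{S²} f(x + tω) dσ(ω) be the free sine wave propagator applied to f. Then for every x ∈ ℝ³, ∫_0^∞ |u_f(t,x)| dt ≤ (1/4π) ∫_{ℝ³} |f(y)|/|x−y| dy. Consequently sup_{x ∈ ℝ³} ∫_0^∞ |u_f(t,x)| dt ≤ (1/4π) ‖f‖_K, the reversed space-time estimate ‖ sin(t√(−Δ))/√(−Δ) f ‖_{L^∞_x L¹_t} ≲ ‖f‖_K. -/

import Mathlib

set_option autoImplicit false

open MeasureTheory ENNReal Real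

noncomputable section

/-- `ℝ³` as a Euclidean space. -/
abbrev R3 : Type := EuclideanSpace ℝ (Fin 3)

/-- The surface measure on the unit sphere `S² ⊂ ℝ³`. -/
def sphereMeasure : Measure (Metric.sphere (0 : R3) 1) :=
  (volume : Measure R3).toSphere

/-- The free sine wave propagator (Kirchhoff formula):
`u_f(t,x) = (t/4π) ∫_{S²} f(x + tω) dσ(ω)`. -/
def sinProp (f : R3 → ℂ) (t : ℝ) (x : R3) : ℂ :=
  (t / (4 * π)) • ∫ ω : Metric.sphere (0 : R3) 1, f (x + t • (ω : R3)) ∂sphereMeasure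

/-- The (global) Kato norm of a function `V` on `ℝ³`:
`‖V‖_K = sup_y ∫ |V(x)| / |x - y| dx`. -/
def katoNorm {E : Type*} [NormedAddCommGroup E] (V : R3 → E) : ℝ≥0∞ :=
  ⨆ y : R3, ∫⁻ x : R3, (‖V x‖₊ : ℝ≥0∞) / (‖x - y‖₊ : ℝ≥0∞)

lemma hmp' : MeasurePreserving (homeomorphUnitSphereProd R3)
    ((volume : Measure R3).comap (↑))
    (sphereMeasure.prod (Measure.volumeIoiPow 2)) := by
  have h := (volume : Measure R3).measurePreserving_homeomorphUnitSphereProd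
  have : Module.finrank ℝ R3 - 1 = 2 := by simp [finrank_euclideanSpace]
  rwa [this] at h

lemma polar_meas (F : R3 → ℝ≥0∞) (hF : Measurable F) :
    ∫⁻ z, F z ∂(volume : Measure R3)
      = ∫⁻ p : (Metric.sphere (0:R3) 1) × Set.Ioi (0:ℝ),
          F ((p.2 : ℝ) • (p.1 : R3)) ∂(sphereMeasure.prod (Measure.volumeIoiPow 2)) := by
  have h0 : MeasurableSet ({0}ᶜ : Set R3) := (measurableSet_singleton 0).compl
  have hG : Measurable fun p : (Metric.sphere (0:R3) 1) × Set.Ioi (0:ℝ) =>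
      F ((p.2 : ℝ) • (p.1 : R3)) := by
    apply hF.comp
    exact ((continuous_subtype_val.comp continuous_snd).smul
      (continuous_subtype_val.comp continuous_fst)).measurable
  calc ∫⁻ z, F z ∂(volume : Measure R3)
      = ∫⁻ z in ({0}ᶜ : Set R3), F z ∂(volume : Measure R3) := by
        rw [Measure.restrict_congr_set (t := Set.univ), Measure.restrict_univ]
        rw [Filter.eventuallyEq_univ, mem_ae_iff]
        simp
    _ = ∫⁻ x : ({0}ᶜ : Set R3), F x ∂((volume : Measure R3).comap (↑)) :=
        (lintegral_subtype_comap h0 F).symm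
    _ = ∫⁻ x : ({0}ᶜ : Set R3),
          F (((homeomorphUnitSphereProd R3 x).2 : ℝ) •
            ((homeomorphUnitSphereProd R3 x).1 : R3)) ∂((volume : Measure R3).comap (↑)) := by
        refine lintegral_congr fun x => ?_
        congr 1
        simp only [homeomorphUnitSphereProd_apply_fst_coe, homeomorphUnitSphereProd_apply_snd_coe]
        rw [smul_inv_smul₀ (norm_ne_zero_iff.2 x.2)]
    _ = _ := hmp'.lintegral_comp hG

instance : IsFiniteMeasure sphereMeasure := by unfold sphereMeasure; infer_instance

lemma dens_meas : Measurable fun r : Set.Ioi (0:ℝ) => ENNReal.ofReal ((r:ℝ)^2) :=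
  (measurable_subtype_coe.pow_const 2).ennreal_ofReal

lemma smul_meas : Measurable fun p : (Metric.sphere (0:R3) 1) × Set.Ioi (0:ℝ) =>
    ((p.2 : ℝ) • (p.1 : R3)) :=
  ((continuous_subtype_val.comp continuous_snd).smul
    (continuous_subtype_val.comp continuous_fst)).measurable

lemma ae_t (N : Set R3) (h0 : volume N = 0) :
    ∀ᵐ t ∂(volume.restrict (Set.Ioi (0:ℝ))),
      ∀ᵐ ω : Metric.sphere (0:R3) 1 ∂sphereMeasure, t • (ω : R3) ∉ N := by
  set M := toMeasurable volume N with hM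
  have hMm : MeasurableSet M := measurableSet_toMeasurable _ _
  have hM0 : volume M = 0 := by rw [measure_toMeasurable]; exact h0
  have hind : Measurable (M.indicator (1 : R3 → ℝ≥0∞)) := measurable_one.indicator hMm
  have hG : Measurable fun p : (Metric.sphere (0:R3) 1) × Set.Ioi (0:ℝ) =>
      M.indicator (1 : R3 → ℝ≥0∞) ((p.2 : ℝ) • (p.1 : R3)) := hind.comp smul_meas
  have key : ∫⁻ r : Set.Ioi (0:ℝ),
      (∫⁻ ω, M.indicator (1 : R3 → ℝ≥0∞) ((r:ℝ) • (ω : R3)) ∂sphereMeasure)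
        ∂(Measure.volumeIoiPow 2) = 0 := by
    have h1 := polar_meas (M.indicator 1) hind
    rw [lintegral_indicator_one hMm, hM0, lintegral_prod_symm' _ hG] at h1
    exact h1.symm
  have hΦ : Measurable fun r : Set.Ioi (0:ℝ) =>
      ∫⁻ ω, M.indicator (1 : R3 → ℝ≥0∞) ((r:ℝ) • (ω : R3)) ∂sphereMeasure :=
    hG.lintegral_prod_left'
  have hae : ∀ᵐ r : Set.Ioi (0:ℝ) ∂(Measure.volumeIoiPow 2),
      ∀ᵐ ω : Metric.sphere (0:R3) 1 ∂sphereMeasure, (r:ℝ) • (ω : R3) ∉ N := by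
    rw [lintegral_eq_zero_iff hΦ] at key
    filter_upwards [key] with r hr
    rw [Pi.zero_apply] at hr
    have hmω : Measurable fun ω : Metric.sphere (0:R3) 1 =>
        M.indicator (1 : R3 → ℝ≥0∞) ((r:ℝ) • (ω : R3)) :=
      hind.comp (continuous_subtype_val.const_smul ((r:ℝ))).measurable
    rw [lintegral_eq_zero_iff hmω] at hr
    filter_upwards [hr] with ω hω
    intro hmem
    have h2 : ((r:ℝ) • (ω : R3)) ∈ M := subset_toMeasurable _ _ hmem
    rw [Pi.zero_apply, Set.indicator_apply_eq_zero] at hω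
    simpa using hω h2
  have hae2 : ∀ᵐ r : Set.Ioi (0:ℝ) ∂((volume : Measure ℝ).comap (↑)),
      ∀ᵐ ω : Metric.sphere (0:R3) 1 ∂sphereMeasure, (r:ℝ) • (ω : R3) ∉ N := by
    rw [Measure.volumeIoiPow, ae_withDensity_iff dens_meas] at hae
    filter_upwards [hae] with r hr
    exact hr (ENNReal.ofReal_pos.2 (pow_pos r.2 2)).ne'
  rw [ae_iff] at hae2 ⊢
  rw [Measure.restrict_apply' measurableSet_Ioi]
  rw [(MeasurableEmbedding.subtype_coe measurableSet_Ioi).comap_apply] at hae2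
  convert hae2 using 2
  ext t
  simp only [Set.mem_inter_iff, Set.mem_setOf_eq, Set.mem_image]
  constructor
  · rintro ⟨h1, h2⟩; exact ⟨⟨t, h2⟩, h1, rfl⟩
  · rintro ⟨r, hr, rfl⟩; exact ⟨hr, r.2⟩

lemma prod_null (N : Set R3) (h0 : volume N = 0) :
    ∀ᵐ p : (Metric.sphere (0:R3) 1) × Set.Ioi (0:ℝ)
      ∂(sphereMeasure.prod (Measure.volumeIoiPow 2)), ((p.2 : ℝ) • (p.1 : R3)) ∉ N := by
  set M := toMeasurable volume N with hM
  have hMm : MeasurableSet M := measurableSet_toMeasurable _ _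
  have hM0 : volume M = 0 := by rw [measure_toMeasurable]; exact h0
  have hind : Measurable (M.indicator (1 : R3 → ℝ≥0∞)) := measurable_one.indicator hMm
  have hG : Measurable fun p : (Metric.sphere (0:R3) 1) × Set.Ioi (0:ℝ) =>
      M.indicator (1 : R3 → ℝ≥0∞) ((p.2 : ℝ) • (p.1 : R3)) := hind.comp smul_meas
  have h1 := polar_meas (M.indicator 1) hind
  rw [lintegral_indicator_one hMm, hM0] at h1
  replace h1 := h1.symm
  rw [lintegral_eq_zero_iff hG] at h1
  filter_upwards [h1] with p hp
  intro hmem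
  have h2 : ((p.2:ℝ) • (p.1 : R3)) ∈ M := subset_toMeasurable _ _ hmem
  rw [Pi.zero_apply, Set.indicator_apply_eq_zero] at hp
  simpa using hp h2

lemma polar_ae (F : R3 → ℝ≥0∞) (hF : AEMeasurable F volume) :
    ∫⁻ z, F z ∂(volume : Measure R3)
      = ∫⁻ p : (Metric.sphere (0:R3) 1) × Set.Ioi (0:ℝ),
          F ((p.2 : ℝ) • (p.1 : R3)) ∂(sphereMeasure.prod (Measure.volumeIoiPow 2)) := by
  set G := hF.mk F with hGdef
  have hae : F =ᵐ[volume] G := hF.ae_eq_mk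
  have hN : volume {z : R3 | F z ≠ G z} = 0 := hae
  calc ∫⁻ z, F z ∂(volume : Measure R3) = ∫⁻ z, G z ∂(volume : Measure R3) :=
        lintegral_congr_ae hae
    _ = ∫⁻ p : (Metric.sphere (0:R3) 1) × Set.Ioi (0:ℝ),
          G ((p.2 : ℝ) • (p.1 : R3)) ∂(sphereMeasure.prod (Measure.volumeIoiPow 2)) :=
        polar_meas G hF.measurable_mk
    _ = _ := by
        refine lintegral_congr_ae ?_
        filter_upwards [prod_null _ hN] with p hp
        simp only [Set.mem_setOf_eq, not_not] at hp
        exact hp.symm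

lemma key (F : R3 → ℝ≥0∞) (hF : AEMeasurable F volume) :
    ∫⁻ t in Set.Ioi (0:ℝ),
        ENNReal.ofReal t * ∫⁻ ω : Metric.sphere (0:R3) 1, F (t • (ω : R3)) ∂sphereMeasure
      = ∫⁻ z : R3, F z / (‖z‖₊ : ℝ≥0∞) ∂volume := by
  set G := hF.mk F with hGdef
  have hae : F =ᵐ[volume] G := hF.ae_eq_mk
  have hN : volume {z : R3 | F z ≠ G z} = 0 := hae
  have hGm : Measurable G := hF.measurable_mk
  have hGp : Measurable fun p : (Metric.sphere (0:R3) 1) × Set.Ioi (0:ℝ) =>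
      G ((p.2 : ℝ) • (p.1 : R3)) := hGm.comp smul_meas
  have hΦ : Measurable fun r : Set.Ioi (0:ℝ) =>
      ∫⁻ ω, G ((r:ℝ) • (ω : R3)) ∂sphereMeasure := hGp.lintegral_prod_left'
  -- RHS via polar coordinates
  have hRHS : ∫⁻ z : R3, F z / (‖z‖₊ : ℝ≥0∞) ∂volume
      = ∫⁻ p : (Metric.sphere (0:R3) 1) × Set.Ioi (0:ℝ),
          F ((p.2 : ℝ) • (p.1 : R3)) / ENNReal.ofReal (p.2 : ℝ)
            ∂(sphereMeasure.prod (Measure.volumeIoiPow 2)) := by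
    rw [polar_ae (fun z => F z / (‖z‖₊ : ℝ≥0∞))
      (hF.div (measurable_nnnorm.coe_nnreal_ennreal.aemeasurable))]
    refine lintegral_congr fun p => ?_
    congr 1
    have hnorm : ‖(p.2 : ℝ) • (p.1 : R3)‖ = (p.2 : ℝ) := by
      rw [norm_smul, mem_sphere_zero_iff_norm.1 p.1.2, mul_one, Real.norm_eq_abs,
        abs_of_pos p.2.2]
    rw [← enorm_eq_nnnorm, ← ofReal_norm, hnorm]
  rw [hRHS]
  -- replace F by G a.e. on both sides
  have hL : ∫⁻ t in Set.Ioi (0:ℝ),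
        ENNReal.ofReal t * ∫⁻ ω : Metric.sphere (0:R3) 1, F (t • (ω : R3)) ∂sphereMeasure
      = ∫⁻ t in Set.Ioi (0:ℝ),
        ENNReal.ofReal t * ∫⁻ ω : Metric.sphere (0:R3) 1, G (t • (ω : R3)) ∂sphereMeasure := by
    refine lintegral_congr_ae ?_
    filter_upwards [ae_t _ hN] with t ht
    congr 1
    refine lintegral_congr_ae ?_
    filter_upwards [ht] with ω hω
    simpa [Set.mem_setOf_eq, not_not] using hω
  have hR : ∫⁻ p : (Metric.sphere (0:R3) 1) × Set.Ioi (0:ℝ),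
          F ((p.2 : ℝ) • (p.1 : R3)) / ENNReal.ofReal (p.2 : ℝ)
            ∂(sphereMeasure.prod (Measure.volumeIoiPow 2))
      = ∫⁻ p : (Metric.sphere (0:R3) 1) × Set.Ioi (0:ℝ),
          G ((p.2 : ℝ) • (p.1 : R3)) / ENNReal.ofReal (p.2 : ℝ)
            ∂(sphereMeasure.prod (Measure.volumeIoiPow 2)) := by
    refine lintegral_congr_ae ?_
    filter_upwards [prod_null _ hN] with p hp
    congr 1
    simpa [Set.mem_setOf_eq, not_not] using hp
  rw [hL, hR]
  -- now everything is measurable; compute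
  calc ∫⁻ t in Set.Ioi (0:ℝ),
        ENNReal.ofReal t * ∫⁻ ω : Metric.sphere (0:R3) 1, G (t • (ω : R3)) ∂sphereMeasure
      = ∫⁻ r : Set.Ioi (0:ℝ),
          ENNReal.ofReal (r:ℝ) * ∫⁻ ω, G ((r:ℝ) • (ω : R3)) ∂sphereMeasure
            ∂((volume : Measure ℝ).comap (↑)) :=
        (lintegral_subtype_comap measurableSet_Ioi _).symm
    _ = ∫⁻ r : Set.Ioi (0:ℝ),
          (∫⁻ ω, G ((r:ℝ) • (ω : R3)) ∂sphereMeasure) / ENNReal.ofReal (r:ℝ)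
            ∂(Measure.volumeIoiPow 2) := by
        rw [Measure.volumeIoiPow, lintegral_withDensity_eq_lintegral_mul _ dens_meas
          (g := fun r : Set.Ioi (0:ℝ) => (∫⁻ ω, G ((r:ℝ) • (ω : R3)) ∂sphereMeasure) / ENNReal.ofReal (r:ℝ))
          (hΦ.div measurable_subtype_coe.ennreal_ofReal)]
        refine lintegral_congr fun r => ?_
        have hc0 : ENNReal.ofReal (r:ℝ) ≠ 0 := (ENNReal.ofReal_pos.2 r.2).ne'
        have hct : ENNReal.ofReal (r:ℝ) ≠ ⊤ := ENNReal.ofReal_ne_top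
        simp only [Pi.mul_apply]
        rw [div_eq_mul_inv, sq, ENNReal.ofReal_mul r.2.le,
          mul_mul_mul_comm, ENNReal.mul_inv_cancel hc0 hct, mul_one, mul_comm]
    _ = ∫⁻ r : Set.Ioi (0:ℝ),
          ∫⁻ ω, G ((r:ℝ) • (ω : R3)) / ENNReal.ofReal (r:ℝ) ∂sphereMeasure
            ∂(Measure.volumeIoiPow 2) := by
        refine lintegral_congr fun r => ?_
        rw [div_eq_mul_inv, ← lintegral_mul_const' _ _
          (ENNReal.inv_ne_top.2 (ENNReal.ofReal_pos.2 r.2).ne')]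
        simp_rw [div_eq_mul_inv]
    _ = _ := (lintegral_prod_symm' _ (hGp.div
          (measurable_subtype_coe.ennreal_ofReal.comp measurable_snd))).symm

theorem main (f : R3 → ℂ) (hf : LocallyIntegrable f volume) (x : R3) :
    ∫⁻ t in Set.Ioi (0 : ℝ),
        (‖((t / (4 * π)) • ∫ ω : Metric.sphere (0 : R3) 1,
            f (x + t • (ω : R3)) ∂sphereMeasure : ℂ)‖₊ : ℝ≥0∞) ≤
      (ENNReal.ofReal (4 * π))⁻¹ * ∫⁻ y : R3, (‖f y‖₊ : ℝ≥0∞) / (‖x - y‖₊ : ℝ≥0∞) := by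
  set Fn : R3 → ℝ≥0∞ := fun z => (‖f (x + z)‖₊ : ℝ≥0∞) with hFndef
  have hFn : AEMeasurable Fn volume := by
    have h1 : AEMeasurable (fun z : R3 => (‖f z‖₊ : ℝ≥0∞)) volume :=
      hf.aestronglyMeasurable.enorm
    exact h1.comp_quasiMeasurePreserving
      (measurePreserving_add_left volume x).quasiMeasurePreserving
  have h4π : (0:ℝ) < 4 * π := by positivity
  have hc0 : ENNReal.ofReal (4 * π) ≠ 0 := (ENNReal.ofReal_pos.2 h4π).ne'
  -- translate the right-hand side
  have htrans : ∫⁻ y : R3, (‖f y‖₊ : ℝ≥0∞) / (‖x - y‖₊ : ℝ≥0∞)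
      = ∫⁻ z : R3, Fn z / (‖z‖₊ : ℝ≥0∞) ∂volume := by
    rw [← lintegral_add_left_eq_self (fun y : R3 => (‖f y‖₊ : ℝ≥0∞) / (‖x - y‖₊ : ℝ≥0∞)) x]
    refine lintegral_congr fun z => ?_
    have hz : x - (x + z) = -z := by abel
    simp only [hz, nnnorm_neg]; rfl
  rw [htrans, ← key Fn hFn, ← lintegral_const_mul' _ _ (ENNReal.inv_ne_top.2 hc0)]
  refine lintegral_mono_ae ?_
  filter_upwards [ae_restrict_mem measurableSet_Ioi] with t ht
  have hsm : (‖(t / (4 * π) : ℝ)‖₊ : ℝ≥0∞) = ENNReal.ofReal t * (ENNReal.ofReal (4 * π))⁻¹ := by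
    rw [← enorm_eq_nnnorm, ← ofReal_norm, Real.norm_eq_abs,
      abs_of_pos (div_pos ht h4π), ENNReal.ofReal_div_of_pos h4π, div_eq_mul_inv]
  calc (‖((t / (4 * π)) • ∫ ω : Metric.sphere (0 : R3) 1,
          f (x + t • (ω : R3)) ∂sphereMeasure : ℂ)‖₊ : ℝ≥0∞)
      = (‖(t / (4 * π) : ℝ)‖₊ : ℝ≥0∞) *
          (‖∫ ω : Metric.sphere (0 : R3) 1, f (x + t • (ω : R3)) ∂sphereMeasure‖₊ : ℝ≥0∞) := by
        rw [nnnorm_smul]; push_cast; ring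
    _ ≤ (ENNReal.ofReal t * (ENNReal.ofReal (4 * π))⁻¹) *
          ∫⁻ ω : Metric.sphere (0 : R3) 1, (‖f (x + t • (ω : R3))‖₊ : ℝ≥0∞) ∂sphereMeasure := by
        rw [hsm]
        exact mul_le_mul_right (enorm_integral_le_lintegral_enorm _) _
    _ = (ENNReal.ofReal (4 * π))⁻¹ *
          (ENNReal.ofReal t * ∫⁻ ω : Metric.sphere (0:R3) 1, Fn (t • (ω : R3)) ∂sphereMeasure) := by
        ring

theorem sine_reversed_Linfty_L1_kato (f : R3 → ℂ) (hf : LocallyIntegrable f volume) :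
    (∀ x : R3,
      ∫⁻ t in Set.Ioi (0 : ℝ), (‖sinProp f t x‖₊ : ℝ≥0∞) ≤
        (ENNReal.ofReal (4 * π))⁻¹ * ∫⁻ y : R3, (‖f y‖₊ : ℝ≥0∞) / (‖x - y‖₊ : ℝ≥0∞)) ∧
    (⨆ x : R3, ∫⁻ t in Set.Ioi (0 : ℝ), (‖sinProp f t x‖₊ : ℝ≥0∞)) ≤
      (ENNReal.ofReal (4 * π))⁻¹ * katoNorm f := by
  have part1 : ∀ x : R3,
      ∫⁻ t in Set.Ioi (0 : ℝ), (‖sinProp f t x‖₊ : ℝ≥0∞) ≤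
        (ENNReal.ofReal (4 * π))⁻¹ * ∫⁻ y : R3, (‖f y‖₊ : ℝ≥0∞) / (‖x - y‖₊ : ℝ≥0∞) := by
    intro x
    simpa only [sinProp] using main f hf x
  refine ⟨part1, iSup_le fun x => (part1 x).trans (mul_le_mul_right ?_ _)⟩
  have h1 : ∫⁻ y : R3, (‖f y‖₊ : ℝ≥0∞) / (‖x - y‖₊ : ℝ≥0∞)
      = ∫⁻ y : R3, (‖f y‖₊ : ℝ≥0∞) / (‖y - x‖₊ : ℝ≥0∞) :=
    lintegral_congr fun y => by rw [show x - y = -(y - x) by abel, nnnorm_neg]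
  rw [h1, katoNorm]
  exact le_iSup (fun y : R3 => ∫⁻ x' : R3, (‖f x'‖₊ : ℝ≥0∞) / (‖x' - y‖₊ : ℝ≥0∞)) x
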